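/- Let n ≥ 1 and let s : Fin n → ℕ satisfy ∑_i s i = 2·S. Put S' = 3^n·S + (3^n − 1)/2 and define t' : (Fin n × Bool) → ℕ by t' (i, true) = 3^(i:ℕ) + 3^n · (s i) and t' (i, false) = 3^(i:ℕ). If a finite subset B ⊆ Fin n × Bool satisfies ∑_{x ∈ B} t' x = S', then for every i ∈ Fin n exactly one of the pairs (i, true) and (i, false) belongs to B. -/
import Mathlib

/-- Base-3 digit uniqueness: if digits `c i ≤ 2` and `∑ c i * 3^i = ∑ 3^i`,
then every digit equals 1. -/
lemma digit_unique : ∀ (n : ℕ) (c : ℕ → ℕ), (∀ i < n, c i ≤ 2) →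
    ∑ i ∈ Finset.range n, c i * 3 ^ i = ∑ i ∈ Finset.range n, 3 ^ i →
    ∀ i < n, c i = 1 := by
  intro n
  induction n with
  | zero => intro c _ _ i hi; omega
  | succ m ih =>
    intro c hc hsum i hi
    rw [Finset.sum_range_succ', Finset.sum_range_succ'] at hsum
    have h1 : ∑ i ∈ Finset.range m, c (i + 1) * 3 ^ (i + 1)
        = 3 * ∑ i ∈ Finset.range m, c (i + 1) * 3 ^ i := by
      rw [Finset.mul_sum]; exact Finset.sum_congr rfl fun j _ => by ring
    have h2 : ∑ i ∈ Finset.range m, (3:ℕ) ^ (i + 1)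
        = 3 * ∑ i ∈ Finset.range m, 3 ^ i := by
      rw [Finset.mul_sum]; exact Finset.sum_congr rfl fun j _ => by ring
    rw [h1, h2] at hsum
    simp only [pow_zero, mul_one] at hsum
    have hc0 : c 0 ≤ 2 := hc 0 (by omega)
    have hce : c 0 = 1 ∧ ∑ i ∈ Finset.range m, c (i + 1) * 3 ^ i
        = ∑ i ∈ Finset.range m, 3 ^ i := by omega
    have htail := ih (fun j => c (j + 1)) (fun j hj => hc (j + 1) (by omega)) hce.2
    rcases i with _ | j
    · exact hce.1
    · exact htail j (by omega)

/-- Pairing claim in the proof that Partition′ is NP-complete: any subset of the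
doubled sequence summing to `S'` contains, for each index `i`, exactly one of
`(i, true)` and `(i, false)`. -/
theorem partition'_pairing (n S : ℕ) (hn : 1 ≤ n) (s : Fin n → ℕ)
    (hs : ∑ i, s i = 2 * S)
    (B : Finset (Fin n × Bool))
    (hB : ∑ x ∈ B,
        (if x.2 then 3 ^ (x.1 : ℕ) + 3 ^ n * s x.1 else 3 ^ (x.1 : ℕ)) =
        3 ^ n * S + (3 ^ n - 1) / 2) :
    ∀ i : Fin n,
      ((i, true) ∈ B ∧ (i, false) ∉ B) ∨ ((i, true) ∉ B ∧ (i, false) ∈ B) := by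
  classical
  set c : ℕ → ℕ := fun k =>
    if hk : k < n then
      (if ((⟨k, hk⟩ : Fin n), true) ∈ B then 1 else 0) +
      (if ((⟨k, hk⟩ : Fin n), false) ∈ B then 1 else 0)
    else 0 with hc_def
  have hcle : ∀ k < n, c k ≤ 2 := by
    intro k hk
    simp only [hc_def, dif_pos hk]
    split_ifs <;> omega
  -- geometric sum fact
  have hG : ∀ m : ℕ, 2 * ∑ i ∈ Finset.range m, 3 ^ i + 1 = 3 ^ m := by
    intro m
    induction m with
    | zero => simp
    | succ k ih => rw [Finset.sum_range_succ, pow_succ]; omega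
  set G : ℕ := ∑ i ∈ Finset.range n, 3 ^ i with hGdef
  have hGval : 2 * G + 1 = 3 ^ n := hG n
  have hhalf : (3 ^ n - 1) / 2 = G := by omega
  -- rewrite the sum over B
  have hBsum : ∑ x ∈ B,
      (if x.2 then 3 ^ (x.1 : ℕ) + 3 ^ n * s x.1 else 3 ^ (x.1 : ℕ)) =
      ∑ i : Fin n, ((if (i, true) ∈ B then 1 else 0) * (3 ^ (i : ℕ) + 3 ^ n * s i)
        + (if (i, false) ∈ B then 1 else 0) * 3 ^ (i : ℕ)) := by
    have step1 : (∑ x ∈ B, (if x.2 then 3 ^ (x.1 : ℕ) + 3 ^ n * s x.1 else 3 ^ (x.1 : ℕ)))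
        = ∑ x : Fin n × Bool, (if x ∈ B then
            (if x.2 then 3 ^ (x.1 : ℕ) + 3 ^ n * s x.1 else 3 ^ (x.1 : ℕ)) else 0) := by
      rw [Finset.sum_ite_mem, Finset.univ_inter]
    rw [step1, Fintype.sum_prod_type]
    refine Finset.sum_congr rfl fun i _ => ?_
    rw [Fintype.sum_bool]
    by_cases ht : (i, true) ∈ B <;> by_cases hf : (i, false) ∈ B <;> simp [ht, hf]
  have key : ∑ i : Fin n, c (i : ℕ) * 3 ^ (i : ℕ)
        + 3 ^ n * ∑ i : Fin n, (if (i, true) ∈ B then 1 else 0) * s i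
      = ∑ x ∈ B,
        (if x.2 then 3 ^ (x.1 : ℕ) + 3 ^ n * s x.1 else 3 ^ (x.1 : ℕ)) := by
    rw [hBsum, Finset.mul_sum, ← Finset.sum_add_distrib]
    refine Finset.sum_congr rfl fun i _ => ?_
    have : c (i : ℕ) = (if (i, true) ∈ B then 1 else 0)
        + (if (i, false) ∈ B then 1 else 0) := by
      simp only [hc_def, dif_pos i.isLt, Fin.eta]
    rw [this]; ring
  set D : ℕ := ∑ i : Fin n, c (i : ℕ) * 3 ^ (i : ℕ) with hDdef
  set T : ℕ := ∑ i : Fin n, (if (i, true) ∈ B then 1 else 0) * s i with hTdef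
  have hmain : D + 3 ^ n * T = 3 ^ n * S + G := by
    rw [hDdef, hTdef, key, hB, hhalf]
  have hDrange : D = ∑ i ∈ Finset.range n, c i * 3 ^ i :=
    Fin.sum_univ_eq_sum_range (fun i => c i * 3 ^ i) n
  have hDle : D ≤ 2 * G := by
    rw [hDrange, hGdef, Finset.mul_sum]
    exact Finset.sum_le_sum fun i hi =>
      Nat.mul_le_mul_right _ (hcle i (Finset.mem_range.mp hi))
  have hDG : D = G := by
    have h1 : (D + 3 ^ n * T) % 3 ^ n = D % 3 ^ n := by
      exact Nat.add_mul_mod_self_left D (3 ^ n) T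
    have h2 : (3 ^ n * S + G) % 3 ^ n = G % 3 ^ n := Nat.mul_add_mod _ _ _
    have hDlt : D < 3 ^ n := by omega
    have hGlt : G < 3 ^ n := by omega
    rw [← Nat.mod_eq_of_lt hDlt, ← Nat.mod_eq_of_lt hGlt, ← h1, ← h2, hmain]
  have hdig : ∀ i < n, c i = 1 := by
    apply digit_unique n c hcle
    rw [← hDrange, ← hGdef, hDG]
  intro i
  have h1 := hdig (i : ℕ) i.isLt
  simp only [hc_def, dif_pos i.isLt, Fin.eta] at h1
  by_cases ht : (i, true) ∈ B <;> by_cases hf : (i, false) ∈ B <;>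
    simp [ht, hf] at h1 ⊢
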